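/- For every odd K > 2 and every n with (K + 1) ∣ n, there exists a K-XOR-BN on n nodes that is observable with an observation set of size (K * n) / (K + 1). -/
import Mathlib


/-- `F` is observable with observation set `S` if the map from an initial state to its
output sequence (the restriction of each iterate to `S`) is injective. -/
def observable {n : ℕ} (F : (Fin n → Bool) → (Fin n → Bool)) (S : Finset (Fin n)) : Prop :=
  Function.Injective (fun (x : Fin n → Bool) => fun (t : ℕ) (i : S) => (F^[t] x) i.val)

/-- `F` is a `K`-XOR-BN: each local function is the XOR of `K` literals
on pairwise distinct variables. -/
def isXorBN {n : ℕ} (K : ℕ) (F : (Fin n → Bool) → (Fin n → Bool)) : Prop :=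
  ∀ i : Fin n, ∃ idx : Fin K → Fin n, Function.Injective idx ∧ ∃ b : Bool,
    ∀ x, F x i = (List.ofFn (fun j => x (idx j))).foldr Bool.xor b

/-- Bool to `ZMod 2`. -/
def tob (b : Bool) : ZMod 2 := (b.toNat : ZMod 2)

lemma tob_injective : Function.Injective tob := by
  intro a b h
  cases a <;> cases b <;> first | rfl | (exfalso; revert h; decide)

lemma tob_xor (a b : Bool) : tob (xor a b) = tob a + tob b := by
  cases a <;> cases b <;> decide

lemma tob_foldr (l : List Bool) (b : Bool) :
    tob (l.foldr Bool.xor b) = (l.map tob).sum + tob b := by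
  induction l with
  | nil => simp
  | cons a l ih => simp [List.foldr_cons, tob_xor, ih, add_assoc]

theorem K_xor_best_case_copies (K n : ℕ) (hK : 2 < K) (hodd : Odd K)
    (hdvd : (K + 1) ∣ n) :
    ∃ (F : (Fin n → Bool) → (Fin n → Bool)) (S : Finset (Fin n)),
      isXorBN K F ∧ S.card = (K * n) / (K + 1) ∧ observable F S := by
  obtain ⟨m, hm⟩ := hdvd
  have e : Fin (K + 1) × Fin m ≃ Fin n :=
    finProdFinEquiv.trans (finCongr hm.symm)
  set idx : Fin n → Fin K → Fin n :=
    fun v j => e ((e.symm v).1.succAbove j, (e.symm v).2) with hidx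
  set F : (Fin n → Bool) → (Fin n → Bool) :=
    fun x v => (List.ofFn (fun j => x (idx v j))).foldr Bool.xor false with hF
  set T : Finset (Fin (K + 1) × Fin m) :=
    ({Fin.last K}ᶜ : Finset (Fin (K + 1))) ×ˢ (Finset.univ : Finset (Fin m)) with hT
  refine ⟨F, T.map e.toEmbedding, ?_, ?_, ?_⟩
  · -- isXorBN
    intro i
    refine ⟨idx i, ?_, false, fun x => rfl⟩
    intro j j' hjj'
    have := e.injective hjj'
    rw [Prod.ext_iff] at this
    exact Fin.succAbove_right_injective this.1
  · -- cardinality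
    rw [Finset.card_map, hT, Finset.card_product, Finset.card_compl]
    simp only [Finset.card_singleton, Finset.card_univ, Fintype.card_fin]
    rw [hm]
    have : K * ((K + 1) * m) = (K + 1) * (K * m) := by ring
    rw [this, Nat.mul_div_cancel_left _ (Nat.succ_pos K), Nat.add_sub_cancel]
  · -- observability
    intro x y hxy
    have Hobs : ∀ t : ℕ, ∀ p ∈ T, F^[t] x (e p) = F^[t] y (e p) := by
      intro t p hp
      have := congrFun (congrFun hxy t) ⟨e p, Finset.mem_map_of_mem _ hp⟩
      exact this
    have memT : ∀ (r : Fin (K + 1)) (q : Fin m), r ≠ Fin.last K → (r, q) ∈ T := by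
      intro r q hr
      simp [hT, hr]
    have H0 : ∀ (r : Fin (K + 1)) (q : Fin m), r ≠ Fin.last K →
        x (e (r, q)) = y (e (r, q)) := by
      intro r q hr
      have := Hobs 0 (r, q) (memT r q hr)
      simpa using this
    have H1 : ∀ (r : Fin (K + 1)) (q : Fin m), r ≠ Fin.last K →
        F x (e (r, q)) = F y (e (r, q)) := by
      intro r q hr
      have := Hobs 1 (r, q) (memT r q hr)
      simpa using this
    -- key: tob (F z (e (r,q))) = sum over succAbove
    have keyF : ∀ (z : Fin n → Bool) (r : Fin (K + 1)) (q : Fin m),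
        tob (F z (e (r, q))) = ∑ j : Fin K, tob (z (e (r.succAbove j, q))) := by
      intro z r q
      rw [hF]
      simp only
      rw [tob_foldr]
      simp only [tob, Bool.toNat_false, Nat.cast_zero, add_zero]
      rw [List.map_ofFn, List.sum_ofFn]
      apply Finset.sum_congr rfl
      intro j _
      simp [hidx, Equiv.symm_apply_apply, tob]
    -- total block sums are equal
    have hr0 : (⟨0, by omega⟩ : Fin (K + 1)) ≠ Fin.last K := by
      intro h
      have := congrArg Fin.val h
      simp [Fin.last] at this
      omega
    have Hsum : ∀ q : Fin m,
        (∑ r : Fin (K + 1), tob (x (e (r, q)))) = ∑ r : Fin (K + 1), tob (y (e (r, q))) := by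
      intro q
      rw [Fin.sum_univ_succAbove (fun r => tob (x (e (r, q)))) ⟨0, by omega⟩,
          Fin.sum_univ_succAbove (fun r => tob (y (e (r, q)))) ⟨0, by omega⟩]
      rw [← keyF x _ q, ← keyF y _ q, H0 _ q hr0, H1 _ q hr0]
    -- conclude equality at the unobserved node
    have Hlast : ∀ q : Fin m, x (e (Fin.last K, q)) = y (e (Fin.last K, q)) := by
      intro q
      apply tob_injective
      have hx := Fin.sum_univ_succAbove (fun r => tob (x (e (r, q)))) (Fin.last K)
      have hy := Fin.sum_univ_succAbove (fun r => tob (y (e (r, q)))) (Fin.last K)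
      have hrest : (∑ j : Fin K, tob (x (e ((Fin.last K).succAbove j, q)))) =
          ∑ j : Fin K, tob (y (e ((Fin.last K).succAbove j, q))) := by
        apply Finset.sum_congr rfl
        intro j _
        rw [H0 _ q]
        exact Fin.succAbove_ne _ j
      have := Hsum q
      rw [hx, hy, hrest] at this
      exact add_right_cancel this
    funext v
    rcases hp : e.symm v with ⟨r, q⟩
    have hv : v = e (r, q) := by rw [← hp, Equiv.apply_symm_apply]
    rw [hv]
    rcases eq_or_ne r (Fin.last K) with h | h
    · rw [h]; exact Hlast q
    · exact H0 r q h
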